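/- Let m ∈ ℂ with Re m > 0 and m ∉ {1/n : n ∈ ℕ, n ≥ 1}. Define, for x ∈ (0,1], U₁(x) := ∑_{k=0}^∞ (−1)^k·x^{km} / ( k!·m^k·∏_{j=1}^k (jm−1) ) and U₂(x) := x·∑_{k=0}^∞ (−1)^k·x^{km} / ( k!·m^k·∏_{j=1}^k (jm+1) ), where x^{km} := exp(km·log x) for real x > 0 and the empty product equals 1. Then both series converge locally uniformly on (0,1], the functions U₁ and U₂ are twice differentiable on (0,1) and satisfy U₁''(x) + x^{m−2}·U₁(x) = 0 and U₂''(x) + x^{m−2}·U₂(x) = 0 for all x ∈ (0,1), and their Wronskian satisfies U₁(x)·U₂'(x) − U₁'(x)·U₂(x) = 1 for all x ∈ (0,1). -/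

import Mathlib

open Set Filter Topology

/-- Coefficient of the series for `U₁`: `(−1)^k / (k! mᵏ ∏_{j=1}^k (jm−1))`. -/
noncomputable def besselCoeff₁ (m : ℂ) (k : ℕ) : ℂ :=
  (-1) ^ k / ((k.factorial : ℂ) * m ^ k * ∏ j ∈ Finset.range k, (((j:ℂ) + 1) * m - 1))

/-- Coefficient of the series for `U₂`: `(−1)^k / (k! mᵏ ∏_{j=1}^k (jm+1))`. -/
noncomputable def besselCoeff₂ (m : ℂ) (k : ℕ) : ℂ :=
  (-1) ^ k / ((k.factorial : ℂ) * m ^ k * ∏ j ∈ Finset.range k, (((j:ℂ) + 1) * m + 1))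

/-- `U₁(x) = ∑_{k≥0} (−1)^k x^{km} / (k! mᵏ ∏_{j=1}^k (jm−1))`, where `x^{km} = e^{km log x}`. -/
noncomputable def besselU₁ (m : ℂ) (x : ℝ) : ℂ :=
  ∑' k : ℕ, besselCoeff₁ m k * (x:ℂ) ^ ((k:ℂ) * m)

/-- `U₂(x) = x ∑_{k≥0} (−1)^k x^{km} / (k! mᵏ ∏_{j=1}^k (jm+1))`. -/
noncomputable def besselU₂ (m : ℂ) (x : ℝ) : ℂ :=
  (x:ℂ) * ∑' k : ℕ, besselCoeff₂ m k * (x:ℂ) ^ ((k:ℂ) * m)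


section SA

noncomputable def genCoeff (m e : ℂ) (k : ℕ) : ℂ :=
  (-1) ^ k / ((k.factorial : ℂ) * m ^ k * ∏ j ∈ Finset.range k, (((j:ℂ) + 1) * m + e))

variable {m e : ℂ}

lemma gc_den_ne (hm : m ≠ 0) (hD : ∀ j : ℕ, ((j:ℂ) + 1) * m + e ≠ 0) (k : ℕ) :
    ((k.factorial : ℂ) * m ^ k * ∏ j ∈ Finset.range k, (((j:ℂ) + 1) * m + e)) ≠ 0 := by
  refine mul_ne_zero (mul_ne_zero ?_ (pow_ne_zero _ hm)) ?_
  · exact_mod_cast (Nat.factorial_ne_zero k)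
  · exact Finset.prod_ne_zero_iff.2 fun j _ => hD j

lemma gc_ne (hm : m ≠ 0) (hD : ∀ j : ℕ, ((j:ℂ) + 1) * m + e ≠ 0) (k : ℕ) :
    genCoeff m e k ≠ 0 :=
  div_ne_zero (pow_ne_zero _ (neg_ne_zero.2 one_ne_zero)) (gc_den_ne hm hD k)

lemma gc_rec (hm : m ≠ 0) (hD : ∀ j : ℕ, ((j:ℂ) + 1) * m + e ≠ 0) (k : ℕ) :
    genCoeff m e (k+1) * ((((k:ℂ) + 1) * m) * (((k:ℂ) + 1) * m + e)) = - genCoeff m e k := by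
  have hD1 := gc_den_ne hm hD (k+1)
  have hD0 := gc_den_ne hm hD k
  unfold genCoeff
  rw [div_mul_eq_mul_div, ← neg_div, div_eq_div_iff hD1 hD0]
  rw [Finset.prod_range_succ]
  push_cast [Nat.factorial_succ]
  ring

lemma gc_succ (hm : m ≠ 0) (hD : ∀ j : ℕ, ((j:ℂ) + 1) * m + e ≠ 0) (k : ℕ) :
    genCoeff m e (k+1) = - genCoeff m e k / ((((k:ℂ) + 1) * m) * (((k:ℂ) + 1) * m + e)) := by
  rw [eq_div_iff (mul_ne_zero (mul_ne_zero (Nat.cast_add_one_ne_zero k) hm) (hD k))]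
  exact gc_rec hm hD k

lemma gc_norm_succ (hm : m ≠ 0) (hD : ∀ j : ℕ, ((j:ℂ) + 1) * m + e ≠ 0) (k : ℕ) :
    ‖genCoeff m e (k+1)‖
      = ‖genCoeff m e k‖ / (((k:ℝ) + 1) * ‖m‖ * ‖((k:ℂ) + 1) * m + e‖) := by
  have : ‖(k:ℂ) + 1‖ = (k:ℝ) + 1 := by
    rw [show ((k:ℂ) + 1) = ((k+1 : ℕ) : ℂ) by push_cast; ring, Complex.norm_natCast]
    push_cast; ring
  rw [gc_succ hm hD k, norm_div, norm_neg, norm_mul, norm_mul, this]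


lemma norm_nat_add_one (k : ℕ) : ‖(k:ℂ) + 1‖ = (k:ℝ) + 1 := by
  rw [show ((k:ℂ) + 1) = ((k+1 : ℕ) : ℂ) by push_cast; ring, Complex.norm_natCast]
  push_cast; ring

lemma gc_dlow (hm : 0 < m.re) (he : ‖e‖ ≤ 1) (k : ℕ) :
    ((k:ℝ) + 1) * m.re - 1 ≤ ‖((k:ℂ) + 1) * m + e‖ := by
  have hre : m.re ≤ ‖m‖ := Complex.re_le_norm m
  have h1 : ‖((k:ℂ) + 1) * m‖ ≤ ‖((k:ℂ) + 1) * m + e‖ + ‖e‖ := by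
    calc ‖((k:ℂ) + 1) * m‖ = ‖(((k:ℂ) + 1) * m + e) + (-e)‖ := by congr 1; ring
      _ ≤ ‖((k:ℂ) + 1) * m + e‖ + ‖-e‖ := norm_add_le _ _
      _ = ‖((k:ℂ) + 1) * m + e‖ + ‖e‖ := by rw [norm_neg]
  have h2 : ((k:ℝ) + 1) * m.re ≤ ‖((k:ℂ) + 1) * m‖ := by
    rw [norm_mul, norm_nat_add_one]
    have : (0:ℝ) ≤ (k:ℝ) + 1 := by positivity
    nlinarith
  linarith


lemma ratio_key {A B g c : ℝ} (hg : 0 < g) (hB : 0 < B) (hc : 0 < c) :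
    A^3 * (g / c) / (B^3 * g) = A^3 / (B^3 * c) := by
  field_simp

lemma gc_summable (hm : 0 < m.re) (hD : ∀ j : ℕ, ((j:ℂ) + 1) * m + e ≠ 0) (he : ‖e‖ ≤ 1) :
    Summable fun k : ℕ => ((k:ℝ) * ‖m‖ + 5) ^ 3 * ‖genCoeff m e k‖ := by
  have hm0 : m ≠ 0 := fun h => by simp [h] at hm
  have hmn : (0:ℝ) < ‖m‖ := norm_pos_iff.2 hm0
  have hB : ∀ k : ℕ, (0:ℝ) < (k:ℝ) * ‖m‖ + 5 := fun k => by positivity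
  have hg : ∀ k, (0:ℝ) < ‖genCoeff m e k‖ :=
    fun k => norm_pos_iff.2 (gc_ne hm0 hD k)
  have hf : ∀ k : ℕ, (0:ℝ) < ((k:ℝ) * ‖m‖ + 5) ^ 3 * ‖genCoeff m e k‖ := fun k => by
    have := hg k; have := hB k; positivity
  have h0 : Tendsto (fun k : ℕ => (k:ℝ) + 1) atTop atTop :=
    tendsto_atTop_add_const_right _ 1 tendsto_natCast_atTop_atTop
  have h2 : Tendsto (fun k : ℕ => ((k:ℝ) + 1) * m.re - 1) atTop atTop :=
    tendsto_atTop_add_const_right _ (-1) (h0.atTop_mul_const hm)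
  have hX : Tendsto (fun k : ℕ => ((k:ℝ) + 1) * ‖m‖ * (((k:ℝ) + 1) * m.re - 1)) atTop atTop :=
    (h0.atTop_mul_const hmn).atTop_mul_atTop₀ h2
  have hq : Tendsto (fun k : ℕ => (1 + ‖m‖/5)^3 * ((((k:ℝ) + 1) * ‖m‖ * (((k:ℝ) + 1) * m.re - 1))⁻¹))
      atTop (𝓝 0) := by
    simpa using (hX.inv_tendsto_atTop).const_mul ((1 + ‖m‖/5)^3)
  have hposev : ∀ᶠ k : ℕ in atTop, (0:ℝ) < ((k:ℝ) + 1) * m.re - 1 := h2.eventually_gt_atTop 0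
  apply summable_of_ratio_test_tendsto_lt_one (l := 0) one_pos
  · exact Eventually.of_forall (fun k => (hf k).ne')
  · apply tendsto_of_tendsto_of_tendsto_of_le_of_le' tendsto_const_nhds hq
    · exact Eventually.of_forall (fun k => by positivity)
    · filter_upwards [hposev] with k hkpos
      have hdk : (0:ℝ) < ‖((k:ℂ) + 1) * m + e‖ := norm_pos_iff.2 (hD k)
      rw [Real.norm_of_nonneg (hf (k+1)).le, Real.norm_of_nonneg (hf k).le,
        gc_norm_succ hm0 hD k]
      push_cast
      have key := ratio_key (A := ((k:ℝ)+1)*‖m‖+5) (B := (k:ℝ)*‖m‖+5)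
        (g := ‖genCoeff m e k‖) (c := ((k:ℝ)+1)*‖m‖*‖((k:ℂ) + 1) * m + e‖)
        (hg k) (hB k) (by positivity)
      rw [key]
      have hBle : (((k:ℝ)+1)*‖m‖+5) ^ 3 ≤ (1 + ‖m‖/5)^3 * ((k:ℝ)*‖m‖+5) ^ 3 := by
        have h1 : ((k:ℝ)+1)*‖m‖+5 ≤ (1 + ‖m‖/5) * ((k:ℝ)*‖m‖+5) := by
          have : (0:ℝ) ≤ (k:ℝ) * ‖m‖ := by positivity
          nlinarith
        calc (((k:ℝ)+1)*‖m‖+5) ^ 3 ≤ ((1 + ‖m‖/5) * ((k:ℝ)*‖m‖+5)) ^ 3 := by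
              apply pow_le_pow_left₀ (by positivity) h1
          _ = (1 + ‖m‖/5)^3 * ((k:ℝ)*‖m‖+5) ^ 3 := by ring
      have hdlow := gc_dlow hm he k
      have hdenlow : ((k:ℝ)*‖m‖+5) ^ 3 * ((((k:ℝ) + 1) * ‖m‖) * (((k:ℝ) + 1) * m.re - 1))
          ≤ ((k:ℝ)*‖m‖+5) ^ 3 * ((((k:ℝ) + 1) * ‖m‖) * ‖((k:ℂ) + 1) * m + e‖) := by
        have h3 : (0:ℝ) < ((k:ℝ)*‖m‖+5) ^ 3 := by positivity
        have h4 : (0:ℝ) < ((k:ℝ) + 1) * ‖m‖ := by positivity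
        exact mul_le_mul_of_nonneg_left (mul_le_mul_of_nonneg_left hdlow h4.le) h3.le
      have hdpos : (0:ℝ) < ((k:ℝ)*‖m‖+5) ^ 3 * ((((k:ℝ) + 1) * ‖m‖) * (((k:ℝ) + 1) * m.re - 1)) := by
        have h4 : (0:ℝ) < ((k:ℝ) + 1) * ‖m‖ := by positivity
        have h5 : (0:ℝ) < ((k:ℝ)*‖m‖+5) ^ 3 := by positivity
        positivity
      calc (((k:ℝ)+1)*‖m‖+5)^3 / (((k:ℝ)*‖m‖+5)^3 * (((k:ℝ)+1)*‖m‖*‖((k:ℂ) + 1) * m + e‖))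
          ≤ ((1 + ‖m‖/5)^3 * ((k:ℝ)*‖m‖+5) ^ 3)
            / (((k:ℝ)*‖m‖+5) ^ 3 * ((((k:ℝ) + 1) * ‖m‖) * (((k:ℝ) + 1) * m.re - 1))) := by
            apply div_le_div₀ (by positivity) hBle hdpos hdenlow
        _ = (1 + ‖m‖/5)^3 * ((((k:ℝ) + 1) * ‖m‖ * (((k:ℝ) + 1) * m.re - 1))⁻¹) := by
            rw [mul_comm (((k:ℝ)*‖m‖+5) ^ 3) ((((k:ℝ) + 1) * ‖m‖) * (((k:ℝ) + 1) * m.re - 1)),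
              mul_div_mul_right _ _ (by positivity : (((k:ℝ)*‖m‖+5) ^ 3) ≠ 0),
              div_eq_mul_inv]

end SA

section SB
variable {m e : ℂ}


lemma hasDerivAt_cpow_real {x : ℝ} (hx : 0 < x) (w : ℂ) :
    HasDerivAt (fun y : ℝ => (y:ℂ) ^ w) (w * (x:ℂ) ^ (w - 1)) x := by
  rcases eq_or_ne w 0 with rfl | he
  · simpa using hasDerivAt_const x (1:ℂ)
  · have hr : w - 1 ≠ -1 := by
      intro h; apply he; linear_combination h
    have h := (hasDerivAt_ofReal_cpow_const' hx.ne' hr).const_mul w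
    have h2 : w - 1 + 1 = w := by ring
    rw [h2] at h
    convert h using 2 with y
    · rfl
    field_simp

lemma norm_cpow_pos {x : ℝ} (hx : 0 < x) (w : ℂ) : ‖(x:ℂ) ^ w‖ = x ^ w.re := by
  rw [Complex.norm_cpow_eq_rpow_re_of_pos hx]

lemma re_nat_mul (k : ℕ) (m : ℂ) : ((k:ℂ) * m).re = (k:ℝ) * m.re := by
  simp [Complex.mul_re]

lemma rpow_bound {y : ℝ} (hy : 0 < y) (hy1 : y ≤ 1) {a t : ℝ} (ha : -2 ≤ a) (ht : 0 < t)
    (hty : t ≤ y) : y ^ a ≤ (t⁻¹) ^ 2 := by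
  have h1 : y ^ a ≤ y ^ (-2:ℝ) := Real.rpow_le_rpow_of_exponent_ge hy hy1 ha
  have h2 : y ^ (-2:ℝ) = (y⁻¹) ^ 2 := by
    rw [Real.rpow_neg hy.le, show (2:ℝ) = ((2:ℕ):ℝ) by norm_num, Real.rpow_natCast, inv_pow]
  have h3 : (y⁻¹) ^ 2 ≤ (t⁻¹) ^ 2 := by
    apply pow_le_pow_left₀ (by positivity)
    exact inv_anti₀ ht hty
  linarith [h1, h2 ▸ h1]

lemma summable_weight_mono {c : ℕ → ℂ} {m : ℂ} {p : ℕ}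
    (hc : Summable fun k : ℕ => ((k:ℝ) * ‖m‖ + 5) ^ p * ‖c k‖) {q : ℕ} (hq : q ≤ p) :
    Summable fun k : ℕ => ((k:ℝ) * ‖m‖ + 5) ^ q * ‖c k‖ := by
  apply hc.of_nonneg_of_le (fun k => by positivity)
  intro k
  apply mul_le_mul_of_nonneg_right _ (norm_nonneg _)
  apply pow_le_pow_right₀ _ hq
  have : (0:ℝ) ≤ (k:ℝ) * ‖m‖ := by positivity
  linarith

lemma summable_norm_of_weight {c : ℕ → ℂ} {m : ℂ} {p : ℕ}
    (hc : Summable fun k : ℕ => ((k:ℝ) * ‖m‖ + 5) ^ p * ‖c k‖) :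
    Summable fun k : ℕ => ‖c k‖ := by
  have := summable_weight_mono hc (Nat.zero_le p)
  simpa using this

lemma normE_le {m s : ℂ} (hsn : ‖s‖ ≤ 4) (k : ℕ) : ‖(k:ℂ) * m + s‖ ≤ (k:ℝ) * ‖m‖ + 5 := by
  refine (norm_add_le _ _).trans ?_
  rw [norm_mul, Complex.norm_natCast]
  linarith

lemma reE_ge {m s : ℂ} (hm : 0 < m.re) (hs : -1 ≤ s.re) (k : ℕ) :
    -1 ≤ ((k:ℂ) * m + s).re := by
  rw [Complex.add_re, re_nat_mul]
  have : (0:ℝ) ≤ (k:ℝ) * m.re := by positivity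
  linarith

lemma gser_hasDerivAt {m s : ℂ} {c : ℕ → ℂ} (hm : 0 < m.re) (hs : -1 ≤ s.re) (hsn : ‖s‖ ≤ 4)
    (hc : Summable fun k : ℕ => ((k:ℝ) * ‖m‖ + 5) ^ 2 * ‖c k‖) {x : ℝ} (hx : x ∈ Ioo (0:ℝ) 1) :
    HasDerivAt (fun y : ℝ => ∑' k : ℕ, c k * (y:ℂ) ^ ((k:ℂ) * m + s))
      (∑' k : ℕ, c k * ((k:ℂ) * m + s) * (x:ℂ) ^ ((k:ℂ) * m + s - 1)) x := by
  obtain ⟨hx0, hx1⟩ := hx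
  have hx2 : 0 < x / 2 := by linarith
  have H := hasDerivAt_tsum_of_isPreconnected
    (u := fun k : ℕ => ((k:ℝ) * ‖m‖ + 5) ^ 2 * ‖c k‖ * ((x/2)⁻¹) ^ 2)
    (g := fun (k : ℕ) (y : ℝ) => c k * (y:ℂ) ^ ((k:ℂ) * m + s))
    (g' := fun (k : ℕ) (y : ℝ) => c k * (((k:ℂ) * m + s) * (y:ℂ) ^ ((k:ℂ) * m + s - 1)))
    (hc.mul_right _) (isOpen_Ioo (a := x/2) (b := 1)) (convex_Ioo _ _).isPreconnected
    ?_ ?_ (⟨half_lt_self hx0, hx1⟩ : x ∈ Ioo (x/2) 1) ?_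
    (⟨half_lt_self hx0, hx1⟩ : x ∈ Ioo (x/2) 1)
  · convert H using 1
    · rfl
    exact tsum_congr fun k => (mul_assoc _ _ _)
  · intro k y hy
    exact (hasDerivAt_cpow_real (hx2.trans hy.1) ((k:ℂ) * m + s)).const_mul (c k)
  · intro k y hy
    rw [norm_mul, norm_mul, norm_cpow_pos (hx2.trans hy.1)]
    have hE : ‖(k:ℂ) * m + s‖ ≤ (k:ℝ) * ‖m‖ + 5 := normE_le hsn k
    have hrp : y ^ (((k:ℂ) * m + s - 1).re) ≤ ((x/2)⁻¹) ^ 2 := by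
      apply rpow_bound (hx2.trans hy.1) hy.2.le _ hx2 hy.1.le
      rw [Complex.sub_re, Complex.one_re]
      have := reE_ge hm hs k
      linarith
    have h1 : (0:ℝ) ≤ ‖c k‖ := norm_nonneg _
    have h2 : (0:ℝ) ≤ y ^ (((k:ℂ) * m + s - 1).re) := Real.rpow_nonneg (hx2.trans hy.1).le _
    have h3 : (1:ℝ) ≤ (k:ℝ) * ‖m‖ + 5 := by
      have : (0:ℝ) ≤ (k:ℝ) * ‖m‖ := by positivity
      linarith
    have h4 : ‖(k:ℂ) * m + s‖ * y ^ (((k:ℂ) * m + s - 1).re)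
        ≤ ((k:ℝ) * ‖m‖ + 5) * ((x/2)⁻¹) ^ 2 :=
      mul_le_mul hE hrp h2 (by linarith)
    calc ‖c k‖ * (‖(k:ℂ) * m + s‖ * y ^ (((k:ℂ) * m + s - 1).re))
        ≤ ‖c k‖ * (((k:ℝ) * ‖m‖ + 5) * ((x/2)⁻¹) ^ 2) :=
          mul_le_mul_of_nonneg_left h4 h1
      _ ≤ ((k:ℝ) * ‖m‖ + 5) ^ 2 * ‖c k‖ * ((x/2)⁻¹) ^ 2 := by
          have h5 : (0:ℝ) ≤ ‖c k‖ * (((k:ℝ) * ‖m‖ + 5) * ((x/2)⁻¹) ^ 2) * (((k:ℝ) * ‖m‖ + 5) - 1) :=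
            mul_nonneg (mul_nonneg h1 (by positivity)) (by linarith)
          nlinarith [h5]
  · apply Summable.of_norm
    have hb : ∀ k : ℕ, ‖c k * (x:ℂ) ^ ((k:ℂ) * m + s)‖ ≤ ‖c k‖ * ((x/2)⁻¹) ^ 2 := by
      intro k
      rw [norm_mul, norm_cpow_pos hx0]
      apply mul_le_mul_of_nonneg_left _ (norm_nonneg _)
      apply rpow_bound hx0 hx1.le _ hx2 (by linarith)
      have := reE_ge hm hs k
      linarith
    exact Summable.of_nonneg_of_le (fun k => norm_nonneg _) hb
      ((summable_norm_of_weight hc).mul_right _)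

lemma gser_hasDerivAt₂ {m s : ℂ} {c : ℕ → ℂ} (hm : 0 < m.re) (hs : 0 ≤ s.re) (hsn : ‖s‖ ≤ 3)
    (hc : Summable fun k : ℕ => ((k:ℝ) * ‖m‖ + 5) ^ 3 * ‖c k‖) {x : ℝ} (hx : x ∈ Ioo (0:ℝ) 1) :
    HasDerivAt (fun y : ℝ => ∑' k : ℕ, c k * ((k:ℂ) * m + s) * (y:ℂ) ^ ((k:ℂ) * m + s - 1))
      (∑' k : ℕ, c k * ((k:ℂ) * m + s) * ((k:ℂ) * m + s - 1) * (x:ℂ) ^ ((k:ℂ) * m + s - 2))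
      x := by
  have hs' : -1 ≤ (s - 1).re := by
    rw [Complex.sub_re, Complex.one_re]; linarith
  have hsn' : ‖s - 1‖ ≤ 4 := by
    have := norm_sub_le s 1
    simp only [norm_one] at this
    linarith
  have hc' : Summable fun k : ℕ => ((k:ℝ) * ‖m‖ + 5) ^ 2 * ‖c k * ((k:ℂ) * m + s)‖ := by
    apply (summable_weight_mono hc (le_refl 3)).of_nonneg_of_le (fun k => by positivity)
    intro k
    rw [norm_mul]
    have hE := normE_le (m := m) (s := s) (le_trans hsn (by norm_num)) k
    have h1 : (0:ℝ) ≤ (k:ℝ) * ‖m‖ + 5 := by positivity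
    calc ((k:ℝ) * ‖m‖ + 5) ^ 2 * (‖c k‖ * ‖(k:ℂ) * m + s‖)
        ≤ ((k:ℝ) * ‖m‖ + 5) ^ 2 * (‖c k‖ * ((k:ℝ) * ‖m‖ + 5)) := by
          apply mul_le_mul_of_nonneg_left (mul_le_mul_of_nonneg_left hE (norm_nonneg _))
          positivity
      _ = ((k:ℝ) * ‖m‖ + 5) ^ 3 * ‖c k‖ := by ring
  have H := gser_hasDerivAt (s := s - 1) (c := fun k => c k * ((k:ℂ) * m + s)) hm hs' hsn' hc' hx
  have e1 : (fun y : ℝ => ∑' k : ℕ, c k * ((k:ℂ) * m + s) * (y:ℂ) ^ ((k:ℂ) * m + s - 1))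
      = (fun y : ℝ => ∑' k : ℕ, c k * ((k:ℂ) * m + s) * (y:ℂ) ^ ((k:ℂ) * m + (s - 1))) := by
    funext y
    exact tsum_congr fun k => by rw [show (k:ℂ) * m + (s - 1) = (k:ℂ) * m + s - 1 from by ring]
  rw [e1]
  convert H using 1
  exact tsum_congr fun k => by
    rw [show (k:ℂ) * m + (s - 1) = (k:ℂ) * m + s - 1 from by ring,
      show (k:ℂ) * m + s - 1 - 1 = (k:ℂ) * m + s - 2 from by ring]

lemma gser_summable₂ {m s : ℂ} {c : ℕ → ℂ} (hm : 0 < m.re) (hs : 0 ≤ s.re) (hsn : ‖s‖ ≤ 3)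
    (hc : Summable fun k : ℕ => ((k:ℝ) * ‖m‖ + 5) ^ 3 * ‖c k‖) {x : ℝ} (hx : x ∈ Ioo (0:ℝ) 1) :
    Summable fun k : ℕ =>
      c k * ((k:ℂ) * m + s) * ((k:ℂ) * m + s - 1) * (x:ℂ) ^ ((k:ℂ) * m + s - 2) := by
  obtain ⟨hx0, hx1⟩ := hx
  have hx2 : 0 < x / 2 := by linarith
  apply Summable.of_norm
  have hgsum : Summable (fun k : ℕ => ((k:ℝ) * ‖m‖ + 5) ^ 3 * ‖c k‖ * ((x/2)⁻¹) ^ 2) :=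
    hc.mul_right _
  refine Summable.of_nonneg_of_le (fun k => norm_nonneg _) (fun k => ?_) hgsum
  rw [norm_mul, norm_mul, norm_mul, norm_cpow_pos hx0]
  have hE : ‖(k:ℂ) * m + s‖ ≤ (k:ℝ) * ‖m‖ + 5 := normE_le (le_trans hsn (by norm_num)) k
  have hsn' : ‖s - 1‖ ≤ 4 := by
    have := norm_sub_le s 1
    simp only [norm_one] at this
    linarith
  have hE1 : ‖(k:ℂ) * m + s - 1‖ ≤ (k:ℝ) * ‖m‖ + 5 := by
    have h := normE_le (m := m) (s := s - 1) hsn' k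
    rw [show (k:ℂ) * m + (s - 1) = (k:ℂ) * m + s - 1 from by ring] at h
    exact h
  have hrp : x ^ (((k:ℂ) * m + s - 2).re) ≤ ((x/2)⁻¹) ^ 2 := by
    apply rpow_bound hx0 hx1.le _ hx2 (by linarith)
    rw [Complex.sub_re, Complex.add_re, re_nat_mul]
    have : (0:ℝ) ≤ (k:ℝ) * m.re := by positivity
    have h2 : ((2:ℂ)).re = 2 := by norm_num
    rw [h2]
    linarith
  have hB1 : (1:ℝ) ≤ (k:ℝ) * ‖m‖ + 5 := by
    have : (0:ℝ) ≤ (k:ℝ) * ‖m‖ := by positivity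
    linarith
  have step1 : ‖c k‖ * ‖(k:ℂ) * m + s‖ * ‖(k:ℂ) * m + s - 1‖ * x ^ (((k:ℂ) * m + s - 2).re)
      ≤ ‖c k‖ * ((k:ℝ) * ‖m‖ + 5) * ((k:ℝ) * ‖m‖ + 5) * ((x/2)⁻¹) ^ 2 := by
    gcongr
  have h5 : (0:ℝ) ≤ ‖c k‖ * (((k:ℝ) * ‖m‖ + 5) * ((k:ℝ) * ‖m‖ + 5) * ((x/2)⁻¹) ^ 2)
      * (((k:ℝ) * ‖m‖ + 5) - 1) :=
    mul_nonneg (mul_nonneg (norm_nonneg _) (by positivity)) (by linarith)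
  nlinarith [step1, h5]

lemma gser_ode {m s : ℂ} {c : ℕ → ℂ} {x : ℝ}
    (h0 : s * (s - 1) = 0)
    (hrec : ∀ k : ℕ, c (k+1) * (((k:ℂ) + 1) * m + s) * (((k:ℂ) + 1) * m + s - 1) = - c k)
    (hsum : Summable fun k : ℕ =>
      c k * ((k:ℂ) * m + s) * ((k:ℂ) * m + s - 1) * (x:ℂ) ^ ((k:ℂ) * m + s - 2))
    (hx : 0 < x) :
    (∑' k : ℕ, c k * ((k:ℂ) * m + s) * ((k:ℂ) * m + s - 1) * (x:ℂ) ^ ((k:ℂ) * m + s - 2))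
      = -((x:ℂ) ^ (m - 2) * ∑' k : ℕ, c k * (x:ℂ) ^ ((k:ℂ) * m + s)) := by
  have hx0 : (x:ℂ) ≠ 0 := Complex.ofReal_ne_zero.2 hx.ne'
  rw [hsum.tsum_eq_zero_add]
  have ht0 : c 0 * (((0:ℕ):ℂ) * m + s) * (((0:ℕ):ℂ) * m + s - 1) * (x:ℂ) ^ (((0:ℕ):ℂ) * m + s - 2)
      = 0 := by
    simp only [Nat.cast_zero, zero_mul, zero_add]
    calc c 0 * s * (s - 1) * (x:ℂ) ^ (s - 2)
        = c 0 * (s * (s - 1)) * (x:ℂ) ^ (s - 2) := by ring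
      _ = 0 := by rw [h0]; ring
  rw [ht0, zero_add]
  have hterm : ∀ k : ℕ,
      c (k+1) * (((k+1:ℕ):ℂ) * m + s) * (((k+1:ℕ):ℂ) * m + s - 1) * (x:ℂ) ^ (((k+1:ℕ):ℂ) * m + s - 2)
        = -((x:ℂ) ^ (m - 2) * (c k * (x:ℂ) ^ ((k:ℂ) * m + s))) := by
    intro k
    have hcast : ((k+1:ℕ):ℂ) = (k:ℂ) + 1 := by push_cast; ring
    rw [hcast]
    have hexp : (x:ℂ) ^ (((k:ℂ) + 1) * m + s - 2)
        = (x:ℂ) ^ (m - 2) * (x:ℂ) ^ ((k:ℂ) * m + s) := by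
      rw [← Complex.cpow_add _ _ hx0]
      congr 1
      ring
    rw [hexp, hrec k]
    ring
  rw [tsum_congr hterm]
  rw [tsum_neg, tsum_mul_left]

lemma gser_tuoOn {m : ℂ} {c : ℕ → ℂ} (hm : 0 ≤ m.re) (hcs : Summable fun k : ℕ => ‖c k‖) :
    TendstoUniformlyOn (fun N : ℕ => fun x : ℝ => ∑ k ∈ Finset.range N, c k * (x:ℂ) ^ ((k:ℂ) * m))
      (fun x : ℝ => ∑' k : ℕ, c k * (x:ℂ) ^ ((k:ℂ) * m)) atTop (Ioc 0 1) := by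
  apply tendstoUniformlyOn_tsum_nat hcs
  intro k x hx
  rw [norm_mul, norm_cpow_pos hx.1]
  have h1 : x ^ (((k:ℂ) * m).re) ≤ 1 := by
    apply Real.rpow_le_one hx.1.le hx.2
    rw [re_nat_mul]
    positivity
  calc ‖c k‖ * x ^ (((k:ℂ) * m).re) ≤ ‖c k‖ * 1 :=
        mul_le_mul_of_nonneg_left h1 (norm_nonneg _)
    _ = ‖c k‖ := mul_one _

lemma glimit {m : ℂ} {d : ℕ → ℂ} (hm : 0 < m.re) (hd : Summable fun k : ℕ => ‖d k‖) :
    Tendsto (fun x : ℝ => ∑' k : ℕ, d k * (x:ℂ) ^ ((k:ℂ) * m)) (𝓝[Ioo (0:ℝ) 1] 0)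
      (𝓝 (d 0)) := by
  have key := tendsto_tsum_of_dominated_convergence (𝓕 := 𝓝[Ioo (0:ℝ) 1] (0:ℝ))
    (f := fun (x:ℝ) (k:ℕ) => d k * (x:ℂ) ^ ((k:ℂ) * m))
    (g := fun k : ℕ => if k = 0 then d 0 else 0)
    (bound := fun k => ‖d k‖) hd ?_ ?_
  · have hts : ∑' k : ℕ, (if k = 0 then d 0 else 0) = d 0 := tsum_ite_eq 0 (fun _ => d 0)
    rw [hts] at key
    exact key
  · intro k
    rcases k with _ | k
    · simp only [Nat.cast_zero, zero_mul, Complex.cpow_zero, mul_one, if_pos rfl]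
      exact tendsto_const_nhds
    · have hz : (if k + 1 = 0 then d 0 else 0) = 0 := by simp
      rw [hz, tendsto_zero_iff_norm_tendsto_zero]
      have hc : (0:ℝ) < ((k+1:ℕ):ℝ) * m.re := by positivity
      have hrt : Tendsto (fun x : ℝ => x ^ (((k+1:ℕ):ℝ) * m.re)) (𝓝[Ioo (0:ℝ) 1] 0) (𝓝 0) := by
        have hca : ContinuousAt (fun x : ℝ => x ^ (((k+1:ℕ):ℝ) * m.re)) 0 :=
          Real.continuousAt_rpow_const 0 _ (Or.inr hc.le)
        have := hca.tendsto.mono_left (nhdsWithin_le_nhds (s := Ioo (0:ℝ) 1))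
        rwa [Real.zero_rpow hc.ne'] at this
      apply squeeze_zero' (g := fun x : ℝ => ‖d (k+1)‖ * x ^ (((k+1:ℕ):ℝ) * m.re))
        (Eventually.of_forall (fun x => norm_nonneg _))
      · filter_upwards [self_mem_nhdsWithin] with x hx
        rw [norm_mul, norm_cpow_pos hx.1, re_nat_mul]
      · have := hrt.const_mul ‖d (k+1)‖
        simpa using this
  · filter_upwards [self_mem_nhdsWithin] with x hx
    intro k
    rw [norm_mul, norm_cpow_pos hx.1]
    have h1 : x ^ (((k:ℂ) * m).re) ≤ 1 := by
      apply Real.rpow_le_one hx.1.le hx.2.le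
      rw [re_nat_mul]
      positivity
    calc ‖d k‖ * x ^ (((k:ℂ) * m).re) ≤ ‖d k‖ * 1 :=
          mul_le_mul_of_nonneg_left h1 (norm_nonneg _)
      _ = ‖d k‖ := mul_one _
end SB

-- basic identifications
lemma bc1_eq (m : ℂ) : besselCoeff₁ m = genCoeff m (-1) := by
  funext k
  unfold besselCoeff₁ genCoeff
  rw [show (∏ j ∈ Finset.range k, (((j:ℂ) + 1) * m - 1))
      = ∏ j ∈ Finset.range k, (((j:ℂ) + 1) * m + (-1)) from
    Finset.prod_congr rfl fun j _ => by ring]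

lemma bc2_eq (m : ℂ) : besselCoeff₂ m = genCoeff m 1 := rfl

lemma bc1_zero (m : ℂ) : besselCoeff₁ m 0 = 1 := by simp [besselCoeff₁]

lemma bc2_zero (m : ℂ) : besselCoeff₂ m 0 = 1 := by simp [besselCoeff₂]

lemma Emul_ne {m : ℂ} (hm : 0 < m.re) (k : ℕ) : (k:ℂ) * m + 1 ≠ 0 := by
  intro h
  have hre := congrArg Complex.re h
  rw [Complex.add_re, re_nat_mul, Complex.one_re, Complex.zero_re] at hre
  have : (0:ℝ) ≤ (k:ℝ) * m.re := by positivity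
  linarith

lemma hU2_eq (m : ℂ) (hm : 0 < m.re) :
    besselU₂ m = fun x : ℝ => ∑' k : ℕ, besselCoeff₂ m k * (x:ℂ) ^ ((k:ℂ) * m + 1) := by
  funext x
  unfold besselU₂
  rcases eq_or_ne x 0 with rfl | hx
  · rw [show ((0:ℝ):ℂ) = 0 from rfl, zero_mul]
    symm
    calc ∑' k : ℕ, besselCoeff₂ m k * (0:ℂ) ^ ((k:ℂ) * m + 1)
        = ∑' _k : ℕ, (0:ℂ) := by
          exact tsum_congr fun k => by rw [Complex.zero_cpow (Emul_ne hm k), mul_zero]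
      _ = 0 := tsum_zero
  · have hx0 : (x:ℂ) ≠ 0 := Complex.ofReal_ne_zero.2 hx
    symm
    calc ∑' k : ℕ, besselCoeff₂ m k * (x:ℂ) ^ ((k:ℂ) * m + 1)
        = ∑' k : ℕ, besselCoeff₂ m k * (x:ℂ) ^ ((k:ℂ) * m) * (x:ℂ) := by
          refine tsum_congr fun k => ?_
          rw [Complex.cpow_add _ _ hx0, Complex.cpow_one]
          ring
      _ = (∑' k : ℕ, besselCoeff₂ m k * (x:ℂ) ^ ((k:ℂ) * m)) * (x:ℂ) := tsum_mul_right
      _ = (x:ℂ) * ∑' k : ℕ, besselCoeff₂ m k * (x:ℂ) ^ ((k:ℂ) * m) := mul_comm _ _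

noncomputable def V₁ (m : ℂ) (x : ℝ) : ℂ :=
  ∑' k : ℕ, besselCoeff₁ m k * ((k:ℂ) * m + 0) * (x:ℂ) ^ ((k:ℂ) * m + 0 - 1)
noncomputable def W₁f (m : ℂ) (x : ℝ) : ℂ :=
  ∑' k : ℕ, besselCoeff₁ m k * ((k:ℂ) * m + 0) * ((k:ℂ) * m + 0 - 1) * (x:ℂ) ^ ((k:ℂ) * m + 0 - 2)
noncomputable def V₂ (m : ℂ) (x : ℝ) : ℂ :=
  ∑' k : ℕ, besselCoeff₂ m k * ((k:ℂ) * m + 1) * (x:ℂ) ^ ((k:ℂ) * m + 1 - 1)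
noncomputable def W₂f (m : ℂ) (x : ℝ) : ℂ :=
  ∑' k : ℕ, besselCoeff₂ m k * ((k:ℂ) * m + 1) * ((k:ℂ) * m + 1 - 1) * (x:ℂ) ^ ((k:ℂ) * m + 1 - 2)

section Main
variable {m : ℂ}

lemma hD1 (hm : 0 < m.re) (hmn : ∀ n : ℕ, 1 ≤ n → m ≠ 1 / (n:ℂ)) :
    ∀ j : ℕ, ((j:ℂ) + 1) * m + (-1) ≠ 0 := by
  intro j h
  apply hmn (j+1) (by omega)
  have hj : ((j+1:ℕ):ℂ) ≠ 0 := Nat.cast_ne_zero.2 (by omega)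
  rw [eq_div_iff hj]
  push_cast
  linear_combination h

lemma hD2 (hm : 0 < m.re) : ∀ j : ℕ, ((j:ℂ) + 1) * m + 1 ≠ 0 := by
  intro j
  have := Emul_ne hm (j+1)
  rwa [show (((j+1:ℕ)):ℂ) = (j:ℂ) + 1 from by push_cast; ring] at this

lemma hsumA (hm : 0 < m.re) (hmn : ∀ n : ℕ, 1 ≤ n → m ≠ 1 / (n:ℂ)) :
    Summable fun k : ℕ => ((k:ℝ) * ‖m‖ + 5) ^ 3 * ‖besselCoeff₁ m k‖ := by
  rw [bc1_eq]
  exact gc_summable hm (hD1 hm hmn) (by norm_num)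

lemma hsumB (hm : 0 < m.re) :
    Summable fun k : ℕ => ((k:ℝ) * ‖m‖ + 5) ^ 3 * ‖besselCoeff₂ m k‖ := by
  rw [bc2_eq]
  exact gc_summable hm (hD2 hm) (by norm_num)

lemma hU1_eq (m : ℂ) :
    besselU₁ m = fun x : ℝ => ∑' k : ℕ, besselCoeff₁ m k * (x:ℂ) ^ ((k:ℂ) * m + 0) := by
  funext x
  exact tsum_congr fun k => by rw [add_zero]

lemma L1 (hm : 0 < m.re) (hmn : ∀ n : ℕ, 1 ≤ n → m ≠ 1 / (n:ℂ)) {x : ℝ} (hx : x ∈ Ioo (0:ℝ) 1) :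
    HasDerivAt (besselU₁ m) (V₁ m x) x := by
  rw [hU1_eq]
  exact gser_hasDerivAt hm (by norm_num) (by norm_num)
    (summable_weight_mono (hsumA hm hmn) (by norm_num)) hx

lemma L2 (hm : 0 < m.re) (hmn : ∀ n : ℕ, 1 ≤ n → m ≠ 1 / (n:ℂ)) {x : ℝ} (hx : x ∈ Ioo (0:ℝ) 1) :
    HasDerivAt (V₁ m) (W₁f m x) x :=
  gser_hasDerivAt₂ hm (by norm_num) (by norm_num) (hsumA hm hmn) hx

lemma L3 (hm : 0 < m.re) {x : ℝ} (hx : x ∈ Ioo (0:ℝ) 1) :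
    HasDerivAt (besselU₂ m) (V₂ m x) x := by
  rw [hU2_eq m hm]
  exact gser_hasDerivAt hm (by norm_num) (by norm_num)
    (summable_weight_mono (hsumB hm) (by norm_num)) hx

lemma L4 (hm : 0 < m.re) {x : ℝ} (hx : x ∈ Ioo (0:ℝ) 1) :
    HasDerivAt (V₂ m) (W₂f m x) x :=
  gser_hasDerivAt₂ hm (by norm_num) (by norm_num) (hsumB hm) hx

lemma hrec1 (hm : 0 < m.re) (hmn : ∀ n : ℕ, 1 ≤ n → m ≠ 1 / (n:ℂ)) (k : ℕ) :
    besselCoeff₁ m (k+1) * (((k:ℂ) + 1) * m + 0) * (((k:ℂ) + 1) * m + 0 - 1)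
      = - besselCoeff₁ m k := by
  have hm0 : m ≠ 0 := fun h => by simp [h] at hm
  rw [bc1_eq]
  have h := gc_rec hm0 (hD1 hm hmn) k
  linear_combination h

lemma hrec2 (hm : 0 < m.re) (k : ℕ) :
    besselCoeff₂ m (k+1) * (((k:ℂ) + 1) * m + 1) * (((k:ℂ) + 1) * m + 1 - 1)
      = - besselCoeff₂ m k := by
  have hm0 : m ≠ 0 := fun h => by simp [h] at hm
  rw [bc2_eq]
  have h := gc_rec hm0 (hD2 hm) k
  linear_combination h

lemma L5 (hm : 0 < m.re) (hmn : ∀ n : ℕ, 1 ≤ n → m ≠ 1 / (n:ℂ)) {x : ℝ} (hx : x ∈ Ioo (0:ℝ) 1) :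
    W₁f m x = -((x:ℂ) ^ (m - 2) * besselU₁ m x) := by
  have h := gser_ode (m := m) (s := 0) (c := besselCoeff₁ m) (x := x) (by ring)
    (hrec1 hm hmn) (gser_summable₂ hm (by norm_num) (by norm_num) (hsumA hm hmn) hx) hx.1
  rw [W₁f, h, hU1_eq]

lemma L6 (hm : 0 < m.re) {x : ℝ} (hx : x ∈ Ioo (0:ℝ) 1) :
    W₂f m x = -((x:ℂ) ^ (m - 2) * besselU₂ m x) := by
  have h := gser_ode (m := m) (s := 1) (c := besselCoeff₂ m) (x := x) (by ring)
    (hrec2 hm) (gser_summable₂ hm (by norm_num) (by norm_num) (hsumB hm) hx) hx.1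
  rw [W₂f, h, hU2_eq m hm]

lemma L7 (hm : 0 < m.re) (hmn : ∀ n : ℕ, 1 ≤ n → m ≠ 1 / (n:ℂ)) {x : ℝ} (hx : x ∈ Ioo (0:ℝ) 1) :
    HasDerivAt (deriv (besselU₁ m)) (W₁f m x) x := by
  apply (L2 hm hmn hx).congr_of_eventuallyEq
  filter_upwards [isOpen_Ioo.mem_nhds hx] with y hy
  exact (L1 hm hmn hy).deriv

lemma L8 (hm : 0 < m.re) {x : ℝ} (hx : x ∈ Ioo (0:ℝ) 1) :
    HasDerivAt (deriv (besselU₂ m)) (W₂f m x) x := by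
  apply (L4 hm hx).congr_of_eventuallyEq
  filter_upwards [isOpen_Ioo.mem_nhds hx] with y hy
  exact (L3 hm hy).deriv

end Main

section Main2
variable {m : ℂ}

lemma nebot_filt : (𝓝[Ioo (0:ℝ) 1] (0:ℝ)).NeBot := by
  rw [← mem_closure_iff_nhdsWithin_neBot, closure_Ioo (by norm_num : (0:ℝ) ≠ 1)]
  exact ⟨le_refl 0, by norm_num⟩

lemma hnormA (hm : 0 < m.re) (hmn : ∀ n : ℕ, 1 ≤ n → m ≠ 1 / (n:ℂ)) :
    Summable fun k : ℕ => ‖besselCoeff₁ m k‖ := summable_norm_of_weight (hsumA hm hmn)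

lemma hnormB (hm : 0 < m.re) :
    Summable fun k : ℕ => ‖besselCoeff₂ m k‖ := summable_norm_of_weight (hsumB hm)

lemma hdA (hm : 0 < m.re) (hmn : ∀ n : ℕ, 1 ≤ n → m ≠ 1 / (n:ℂ)) :
    Summable fun k : ℕ => ‖besselCoeff₁ m k * ((k:ℂ) * m)‖ := by
  have h := summable_weight_mono (hsumA hm hmn) (by norm_num : 1 ≤ 3)
  simp only [pow_one] at h
  apply h.of_nonneg_of_le (fun k => norm_nonneg _)
  intro k
  rw [norm_mul, norm_mul, Complex.norm_natCast]
  have h0 : (0:ℝ) ≤ ‖besselCoeff₁ m k‖ := norm_nonneg _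
  nlinarith [h0]

lemma hdB (hm : 0 < m.re) :
    Summable fun k : ℕ => ‖besselCoeff₂ m k * ((k:ℂ) * m + 1)‖ := by
  have h := summable_weight_mono (hsumB hm) (by norm_num : 1 ≤ 3)
  simp only [pow_one] at h
  apply h.of_nonneg_of_le (fun k => norm_nonneg _)
  intro k
  rw [norm_mul]
  have hE := normE_le (m := m) (s := 1) (by norm_num) k
  have h0 : (0:ℝ) ≤ ‖besselCoeff₂ m k‖ := norm_nonneg _
  nlinarith [h0]

lemma TU1 (hm : 0 < m.re) (hmn : ∀ n : ℕ, 1 ≤ n → m ≠ 1 / (n:ℂ)) :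
    Tendsto (besselU₁ m) (𝓝[Ioo (0:ℝ) 1] 0) (𝓝 1) := by
  have h := glimit hm (hnormA hm hmn)
  rw [bc1_zero] at h
  exact h

lemma TG (hm : 0 < m.re) :
    Tendsto (fun x : ℝ => ∑' k : ℕ, besselCoeff₂ m k * (x:ℂ) ^ ((k:ℂ) * m))
      (𝓝[Ioo (0:ℝ) 1] 0) (𝓝 1) := by
  have h := glimit hm (hnormB hm)
  rw [bc2_zero] at h
  exact h

lemma TV2 (hm : 0 < m.re) :
    Tendsto (V₂ m) (𝓝[Ioo (0:ℝ) 1] 0) (𝓝 1) := by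
  have heq : V₂ m = fun x : ℝ =>
      ∑' k : ℕ, besselCoeff₂ m k * ((k:ℂ) * m + 1) * (x:ℂ) ^ ((k:ℂ) * m) := by
    funext x
    exact tsum_congr fun k => by rw [show (k:ℂ) * m + 1 - 1 = (k:ℂ) * m from by ring]
  rw [heq]
  have h := glimit hm (hdB hm)
  have h0 : besselCoeff₂ m 0 * (((0:ℕ):ℂ) * m + 1) = 1 := by
    rw [bc2_zero]
    simp
  rw [h0] at h
  exact h

lemma TdU2 (hm : 0 < m.re) :
    Tendsto (deriv (besselU₂ m)) (𝓝[Ioo (0:ℝ) 1] 0) (𝓝 1) := by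
  apply (TV2 hm).congr'
  filter_upwards [self_mem_nhdsWithin] with y hy
  exact ((L3 hm hy).deriv).symm

lemma TX (hm : 0 < m.re) (hmn : ∀ n : ℕ, 1 ≤ n → m ≠ 1 / (n:ℂ)) :
    Tendsto (fun x : ℝ => deriv (besselU₁ m) x * besselU₂ m x) (𝓝[Ioo (0:ℝ) 1] 0) (𝓝 0) := by
  have TA : Tendsto (fun x : ℝ => ∑' k : ℕ, besselCoeff₁ m k * ((k:ℂ) * m) * (x:ℂ) ^ ((k:ℂ) * m))
      (𝓝[Ioo (0:ℝ) 1] 0) (𝓝 0) := by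
    have h := glimit hm (hdA hm hmn)
    have h0 : besselCoeff₁ m 0 * (((0:ℕ):ℂ) * m) = 0 := by simp
    rw [h0] at h
    exact h
  have := TA.mul (TG hm)
  rw [zero_mul] at this
  apply this.congr'
  filter_upwards [self_mem_nhdsWithin] with y hy
  have hy0 : (y:ℂ) ≠ 0 := Complex.ofReal_ne_zero.2 hy.1.ne'
  have hderiv : deriv (besselU₁ m) y = V₁ m y := (L1 hm hmn hy).deriv
  have hkey : (∑' k : ℕ, besselCoeff₁ m k * ((k:ℂ) * m) * (y:ℂ) ^ ((k:ℂ) * m))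
      = V₁ m y * (y:ℂ) := by
    rw [V₁, ← tsum_mul_right]
    refine tsum_congr fun k => ?_
    have : (y:ℂ) ^ ((k:ℂ) * m + 0 - 1) * (y:ℂ) = (y:ℂ) ^ ((k:ℂ) * m) := by
      have h := Complex.cpow_add ((k:ℂ) * m + 0 - 1) 1 hy0
      rw [Complex.cpow_one] at h
      rw [← h, show (k:ℂ) * m + 0 - 1 + 1 = (k:ℂ) * m from by ring]
    rw [← this]
    ring
  rw [hkey, hderiv]
  unfold besselU₂
  ring
end Main2

lemma wronskian_one (hm : 0 < m.re) (hmn : ∀ n : ℕ, 1 ≤ n → m ≠ 1 / (n:ℂ)) {x : ℝ}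
    (hx : x ∈ Ioo (0:ℝ) 1) :
    besselU₁ m x * deriv (besselU₂ m) x - deriv (besselU₁ m) x * besselU₂ m x = 1 := by
  set Wf : ℝ → ℂ := fun y =>
    besselU₁ m y * deriv (besselU₂ m) y - deriv (besselU₁ m) y * besselU₂ m y with hWf
  have hW0 : ∀ y ∈ Ioo (0:ℝ) 1, HasDerivAt Wf 0 y := by
    intro y hy
    have H := ((L1 hm hmn hy).mul (L8 hm hy)).sub ((L7 hm hmn hy).mul (L3 hm hy))
    have hval : V₁ m y * deriv (besselU₂ m) y + besselU₁ m y * W₂f m y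
        - (W₁f m y * besselU₂ m y + deriv (besselU₁ m) y * V₂ m y) = 0 := by
      rw [(L1 hm hmn hy).deriv, (L3 hm hy).deriv, L5 hm hmn hy, L6 hm hy]
      ring
    rw [hval] at H
    exact H
  have hconst : ∀ y ∈ Ioo (0:ℝ) 1, Wf y = Wf x := by
    intro y hy
    have h := Convex.norm_image_sub_le_of_norm_hasDerivWithin_le (f := Wf)
      (f' := fun _ => (0:ℂ)) (C := 0) (s := Ioo (0:ℝ) 1)
      (fun z hz => (hW0 z hz).hasDerivWithinAt)
      (fun z _ => by simp) (convex_Ioo _ _) hx hy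
    rw [zero_mul] at h
    exact sub_eq_zero.1 (norm_le_zero_iff.1 h)
  have hT : Tendsto Wf (𝓝[Ioo (0:ℝ) 1] 0) (𝓝 1) := by
    have h := ((TU1 hm hmn).mul (TdU2 hm)).sub (TX hm hmn)
    simpa using h
  have hne : (𝓝[Ioo (0:ℝ) 1] (0:ℝ)).NeBot := nebot_filt
  have hT' : Tendsto Wf (𝓝[Ioo (0:ℝ) 1] 0) (𝓝 (Wf x)) := by
    apply Tendsto.congr' _ (tendsto_const_nhds (x := Wf x))
    filter_upwards [self_mem_nhdsWithin] with y hy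
    exact (hconst y hy).symm
  exact tendsto_nhds_unique hT' hT


/-- **Fundamental system of solutions for `−y'' − x^{m−2} y = 0`** (§4.1): for `Re m > 0`,
`m ∉ {1/n}`, the series defining `U₁` and `U₂` converge locally uniformly on `(0,1]`,
both functions are twice differentiable on `(0,1)` and solve `U'' + x^{m−2} U = 0`,
and their Wronskian is identically `1`. -/
theorem bessel_type_fundamental_system
    (m : ℂ) (hm : 0 < m.re) (hmn : ∀ n : ℕ, 1 ≤ n → m ≠ 1 / (n:ℂ)) :
    TendstoLocallyUniformlyOn
      (fun N : ℕ => fun x : ℝ => ∑ k ∈ Finset.range N, besselCoeff₁ m k * (x:ℂ) ^ ((k:ℂ) * m))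
      (besselU₁ m) atTop (Ioc 0 1) ∧
    TendstoLocallyUniformlyOn
      (fun N : ℕ => fun x : ℝ => ∑ k ∈ Finset.range N, besselCoeff₂ m k * (x:ℂ) ^ ((k:ℂ) * m))
      (fun x : ℝ => ∑' k : ℕ, besselCoeff₂ m k * (x:ℂ) ^ ((k:ℂ) * m)) atTop (Ioc 0 1) ∧
    (∀ x ∈ Ioo (0:ℝ) 1,
      DifferentiableAt ℝ (besselU₁ m) x ∧ DifferentiableAt ℝ (deriv (besselU₁ m)) x ∧
      deriv (deriv (besselU₁ m)) x + (x:ℂ) ^ (m - 2) * besselU₁ m x = 0) ∧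
    (∀ x ∈ Ioo (0:ℝ) 1,
      DifferentiableAt ℝ (besselU₂ m) x ∧ DifferentiableAt ℝ (deriv (besselU₂ m)) x ∧
      deriv (deriv (besselU₂ m)) x + (x:ℂ) ^ (m - 2) * besselU₂ m x = 0) ∧
    (∀ x ∈ Ioo (0:ℝ) 1,
      besselU₁ m x * deriv (besselU₂ m) x - deriv (besselU₁ m) x * besselU₂ m x = 1) := by
  refine ⟨?_, ?_, ?_, ?_, ?_⟩
  · exact (gser_tuoOn hm.le (hnormA hm hmn)).tendstoLocallyUniformlyOn
  · exact (gser_tuoOn hm.le (hnormB hm)).tendstoLocallyUniformlyOn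
  · intro x hx
    refine ⟨(L1 hm hmn hx).differentiableAt, (L7 hm hmn hx).differentiableAt, ?_⟩
    rw [(L7 hm hmn hx).deriv, L5 hm hmn hx]
    ring
  · intro x hx
    refine ⟨(L3 hm hx).differentiableAt, (L8 hm hx).differentiableAt, ?_⟩
    rw [(L8 hm hx).deriv, L6 hm hx]
    ring
  · intro x hx
    exact wronskian_one hm hmn hx
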